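/- Let B ≠ 0 on U and define φ₁ = −3·A·(A·S − B_{0.1})/(5·B²) − 3·(A_{0.1} + B_{1.0} − 3·A·R)/(5·B) − (6/5)·Q and φ₂ = 3·(A·S − B_{0.1})/(5·B) − (3/5)·R (formulas (4.8)). Then the pseudoscalar field Ω = (5/3)·(∂φ₁/∂y − ∂φ₂/∂x) is given by the effective formula (4.17): Ω = 2·A·B_{0.1}·(A·S − B_{0.1})/B³ + (2·A_{0.1} − 3·A·R)·B_{0.1}/B² + (B_{1.0} − 2·A_{0.1})·A·S/B² + (A·B_{0.2} − A²·S_{0.1})/B² − A_{0.2}/B + (3·A_{0.1}·R + 3·A·R_{0.1} − A_{1.0}·S − A·S_{1.0})/B + R_{1.0} − 2·Q_{0.1}. -/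

import Mathlib

noncomputable section

open Real

/-- Partial derivative in the first argument (`f_{1.0}`). -/
def pdx (f : ℝ → ℝ → ℝ) : ℝ → ℝ → ℝ := fun x y => deriv (fun t => f t y) x

/-- Partial derivative in the second argument (`f_{0.1}`). -/
def pdy (f : ℝ → ℝ → ℝ) : ℝ → ℝ → ℝ := fun x y => deriv (fun t => f x t) y

/-- Indexed partial derivative: `0 ↦ ∂/∂x`, `1 ↦ ∂/∂y`. -/
def pd (i : Fin 2) (f : ℝ → ℝ → ℝ) : ℝ → ℝ → ℝ := if i = 0 then pdx f else pdy f

/-- Smoothness of a two-variable real function on a set `U ⊆ ℝ²`. -/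
def Smooth2 (U : Set (ℝ × ℝ)) (f : ℝ → ℝ → ℝ) : Prop :=
  ContDiffOn ℝ (⊤ : ℕ∞) (Function.uncurry f) U

/-- The quantity `A` of formula (1.6). -/
def coefA (P Q R S : ℝ → ℝ → ℝ) : ℝ → ℝ → ℝ := fun x y =>
  pdy (pdy P) x y - 2 * pdx (pdy Q) x y + pdx (pdx R) x y
    + 2 * P x y * pdx S x y + S x y * pdx P x y
    - 3 * P x y * pdy R x y - 3 * R x y * pdy P x y
    - 3 * Q x y * pdx R x y + 6 * Q x y * pdy Q x y

/-- The quantity `B` of formula (1.6). -/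
def coefB (P Q R S : ℝ → ℝ → ℝ) : ℝ → ℝ → ℝ := fun x y =>
  pdx (pdx S) x y - 2 * pdx (pdy R) x y + pdy (pdy Q) x y
    - 2 * S x y * pdy P x y - P x y * pdy S x y
    + 3 * S x y * pdx Q x y + 3 * Q x y * pdx S x y
    + 3 * R x y * pdy Q x y - 6 * R x y * pdx R x y

/-- `φ₁` given by formula (4.8). -/
def phiB1 (P Q R S : ℝ → ℝ → ℝ) : ℝ → ℝ → ℝ := fun x y =>
  -3 * coefA P Q R S x y * (coefA P Q R S x y * S x y - pdy (coefB P Q R S) x y)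
      / (5 * (coefB P Q R S x y)^2)
    - 3 * (pdy (coefA P Q R S) x y + pdx (coefB P Q R S) x y
        - 3 * coefA P Q R S x y * R x y) / (5 * coefB P Q R S x y)
    - (6/5) * Q x y

/-- `φ₂` given by formula (4.8). -/
def phiB2 (P Q R S : ℝ → ℝ → ℝ) : ℝ → ℝ → ℝ := fun x y =>
  3 * (coefA P Q R S x y * S x y - pdy (coefB P Q R S) x y) / (5 * coefB P Q R S x y)
    - (3/5) * R x y

open Function

lemma topo : ((⊤:ℕ∞) : WithTop ℕ∞) + 1 ≤ ((⊤:ℕ∞) : WithTop ℕ∞) := by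
  exact_mod_cast le_top

lemma two_le : (2 : WithTop ℕ∞) ≤ ((⊤:ℕ∞) : WithTop ℕ∞) := by
  exact WithTop.coe_le_coe.2 le_top

lemma hasDerivAt_pdx_aux {f : ℝ → ℝ → ℝ} {x y : ℝ}
    (hf : DifferentiableAt ℝ (uncurry f) (x, y)) :
    HasDerivAt (fun t => f t y) (fderiv ℝ (uncurry f) (x, y) (1, 0)) x := by
  have h1 : HasDerivAt (fun t : ℝ => ((t, y) : ℝ × ℝ)) ((1 : ℝ), (0 : ℝ)) x :=
    (hasDerivAt_id x).prodMk (hasDerivAt_const x y)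
  exact hf.hasFDerivAt.comp_hasDerivAt x h1

lemma hasDerivAt_pdy_aux {f : ℝ → ℝ → ℝ} {x y : ℝ}
    (hf : DifferentiableAt ℝ (uncurry f) (x, y)) :
    HasDerivAt (fun t => f x t) (fderiv ℝ (uncurry f) (x, y) (0, 1)) y := by
  have h1 : HasDerivAt (fun t : ℝ => ((x, t) : ℝ × ℝ)) ((0 : ℝ), (1 : ℝ)) y :=
    (hasDerivAt_const y x).prodMk (hasDerivAt_id y)
  exact hf.hasFDerivAt.comp_hasDerivAt y h1

lemma hasDerivAt_pdx' {f : ℝ → ℝ → ℝ} {x y : ℝ}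
    (hf : ContDiffAt ℝ (⊤:ℕ∞) (uncurry f) (x, y)) :
    HasDerivAt (fun t => f t y) (pdx f x y) x :=
  (hasDerivAt_pdx_aux (hf.differentiableAt (by simp))).differentiableAt.hasDerivAt

lemma hasDerivAt_pdy' {f : ℝ → ℝ → ℝ} {x y : ℝ}
    (hf : ContDiffAt ℝ (⊤:ℕ∞) (uncurry f) (x, y)) :
    HasDerivAt (fun t => f x t) (pdy f x y) y :=
  (hasDerivAt_pdy_aux (hf.differentiableAt (by simp))).differentiableAt.hasDerivAt

lemma contDiffAt_pdx {f : ℝ → ℝ → ℝ} {U : Set (ℝ × ℝ)} (hU : IsOpen U)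
    (hf : ∀ q ∈ U, ContDiffAt ℝ (⊤:ℕ∞) (uncurry f) q) {p : ℝ × ℝ} (hp : p ∈ U) :
    ContDiffAt ℝ (⊤:ℕ∞) (uncurry (pdx f)) p := by
  have h1 : ContDiffAt ℝ (⊤:ℕ∞) (fun q : ℝ × ℝ => fderiv ℝ (uncurry f) q (1, 0)) p :=
    ((hf p hp).fderiv_right topo).clm_apply contDiffAt_const
  apply h1.congr_of_eventuallyEq
  filter_upwards [hU.mem_nhds hp] with q hq
  obtain ⟨a, b⟩ := q
  exact (hasDerivAt_pdx_aux ((hf _ hq).differentiableAt (by simp))).deriv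

lemma contDiffAt_pdy {f : ℝ → ℝ → ℝ} {U : Set (ℝ × ℝ)} (hU : IsOpen U)
    (hf : ∀ q ∈ U, ContDiffAt ℝ (⊤:ℕ∞) (uncurry f) q) {p : ℝ × ℝ} (hp : p ∈ U) :
    ContDiffAt ℝ (⊤:ℕ∞) (uncurry (pdy f)) p := by
  have h1 : ContDiffAt ℝ (⊤:ℕ∞) (fun q : ℝ × ℝ => fderiv ℝ (uncurry f) q (0, 1)) p :=
    ((hf p hp).fderiv_right topo).clm_apply contDiffAt_const
  apply h1.congr_of_eventuallyEq
  filter_upwards [hU.mem_nhds hp] with q hq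
  obtain ⟨a, b⟩ := q
  exact (hasDerivAt_pdy_aux ((hf _ hq).differentiableAt (by simp))).deriv

lemma pdx_pdy_symm {f : ℝ → ℝ → ℝ} {U : Set (ℝ × ℝ)} (hU : IsOpen U)
    (hf : ∀ q ∈ U, ContDiffAt ℝ (⊤:ℕ∞) (uncurry f) q) {x y : ℝ} (hp : (x, y) ∈ U) :
    pdx (pdy f) x y = pdy (pdx f) x y := by
  have hsymm := (hf _ hp).isSymmSndFDerivAt (by rw [minSmoothness_of_isRCLikeNormedField]; exact two_le)
  have hd2 : DifferentiableAt ℝ (fderiv ℝ (uncurry f)) (x, y) :=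
    ((hf _ hp).fderiv_right topo).differentiableAt (by simp)
  have hgx : HasDerivAt (fun t : ℝ => ((t, y) : ℝ × ℝ)) ((1 : ℝ), (0 : ℝ)) x :=
    (hasDerivAt_id x).prodMk (hasDerivAt_const x y)
  have hgy : HasDerivAt (fun t : ℝ => ((x, t) : ℝ × ℝ)) ((0 : ℝ), (1 : ℝ)) y :=
    (hasDerivAt_const y x).prodMk (hasDerivAt_id y)
  have e1 : pdx (pdy f) x y = fderiv ℝ (fderiv ℝ (uncurry f)) (x, y) (1, 0) (0, 1) := by
    have hev : (fun t => pdy f t y) =ᶠ[nhds x]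
        (fun t => fderiv ℝ (uncurry f) (t, y) (0, 1)) := by
      have hc : Continuous (fun t : ℝ => ((t, y) : ℝ × ℝ)) := by fun_prop
      filter_upwards [(hU.preimage hc).mem_nhds (by simpa using hp)] with t ht
      exact (hasDerivAt_pdy_aux ((hf _ ht).differentiableAt
        (by simp))).deriv
    have hD : HasDerivAt (fun t => fderiv ℝ (uncurry f) (t, y) (0, 1))
        (fderiv ℝ (fderiv ℝ (uncurry f)) (x, y) (1, 0) (0, 1)) x := by
      have h1 := hd2.hasFDerivAt.comp_hasDerivAt x hgx
      simpa using h1.clm_apply (hasDerivAt_const x ((0 : ℝ), (1 : ℝ)))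
    calc pdx (pdy f) x y = deriv (fun t => pdy f t y) x := rfl
      _ = deriv (fun t => fderiv ℝ (uncurry f) (t, y) (0, 1)) x := hev.deriv_eq
      _ = _ := hD.deriv
  have e2 : pdy (pdx f) x y = fderiv ℝ (fderiv ℝ (uncurry f)) (x, y) (0, 1) (1, 0) := by
    have hev : (fun t => pdx f x t) =ᶠ[nhds y]
        (fun t => fderiv ℝ (uncurry f) (x, t) (1, 0)) := by
      have hc : Continuous (fun t : ℝ => ((x, t) : ℝ × ℝ)) := by fun_prop
      filter_upwards [(hU.preimage hc).mem_nhds (by simpa using hp)] with t ht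
      exact (hasDerivAt_pdx_aux ((hf _ ht).differentiableAt
        (by simp))).deriv
    have hD : HasDerivAt (fun t => fderiv ℝ (uncurry f) (x, t) (1, 0))
        (fderiv ℝ (fderiv ℝ (uncurry f)) (x, y) (0, 1) (1, 0)) y := by
      have h1 := hd2.hasFDerivAt.comp_hasDerivAt y hgy
      simpa using h1.clm_apply (hasDerivAt_const y ((1 : ℝ), (0 : ℝ)))
    calc pdy (pdx f) x y = deriv (fun t => pdx f x t) y := rfl
      _ = deriv (fun t => fderiv ℝ (uncurry f) (x, t) (1, 0)) y := hev.deriv_eq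
      _ = _ := hD.deriv
  rw [e1, e2]
  exact hsymm _ _

lemma smooth_coefA {U : Set (ℝ × ℝ)} (hU : IsOpen U) {P Q R S : ℝ → ℝ → ℝ}
    (hP : ∀ q ∈ U, ContDiffAt ℝ (⊤:ℕ∞) (Function.uncurry P) q)
    (hQ : ∀ q ∈ U, ContDiffAt ℝ (⊤:ℕ∞) (Function.uncurry Q) q)
    (hR : ∀ q ∈ U, ContDiffAt ℝ (⊤:ℕ∞) (Function.uncurry R) q)
    (hS : ∀ q ∈ U, ContDiffAt ℝ (⊤:ℕ∞) (Function.uncurry S) q) :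
    ∀ q ∈ U, ContDiffAt ℝ (⊤:ℕ∞) (Function.uncurry (coefA P Q R S)) q := by
  intro q hq
  have hPyy := contDiffAt_pdy hU (fun r hr => contDiffAt_pdy hU hP hr) hq
  have hQyx := contDiffAt_pdx hU (fun r hr => contDiffAt_pdy hU hQ hr) hq
  have hRxx := contDiffAt_pdx hU (fun r hr => contDiffAt_pdx hU hR hr) hq
  have hSx := contDiffAt_pdx hU hS hq
  have hPx := contDiffAt_pdx hU hP hq
  have hRy := contDiffAt_pdy hU hR hq
  have hPy := contDiffAt_pdy hU hP hq
  have hRx := contDiffAt_pdx hU hR hq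
  have hQy := contDiffAt_pdy hU hQ hq
  have hP0 := hP q hq
  have hQ0 := hQ q hq
  have hR0 := hR q hq
  have hS0 := hS q hq
  exact ((((((((hPyy.sub (contDiffAt_const.mul hQyx)).add hRxx).add
    ((contDiffAt_const.mul hP0).mul hSx)).add (hS0.mul hPx)).sub
    ((contDiffAt_const.mul hP0).mul hRy)).sub ((contDiffAt_const.mul hR0).mul hPy)).sub
    ((contDiffAt_const.mul hQ0).mul hRx)).add ((contDiffAt_const.mul hQ0).mul hQy))

lemma smooth_coefB {U : Set (ℝ × ℝ)} (hU : IsOpen U) {P Q R S : ℝ → ℝ → ℝ}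
    (hP : ∀ q ∈ U, ContDiffAt ℝ (⊤:ℕ∞) (Function.uncurry P) q)
    (hQ : ∀ q ∈ U, ContDiffAt ℝ (⊤:ℕ∞) (Function.uncurry Q) q)
    (hR : ∀ q ∈ U, ContDiffAt ℝ (⊤:ℕ∞) (Function.uncurry R) q)
    (hS : ∀ q ∈ U, ContDiffAt ℝ (⊤:ℕ∞) (Function.uncurry S) q) :
    ∀ q ∈ U, ContDiffAt ℝ (⊤:ℕ∞) (Function.uncurry (coefB P Q R S)) q := by
  intro q hq
  have hSxx := contDiffAt_pdx hU (fun r hr => contDiffAt_pdx hU hS hr) hq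
  have hRyx := contDiffAt_pdx hU (fun r hr => contDiffAt_pdy hU hR hr) hq
  have hQyy := contDiffAt_pdy hU (fun r hr => contDiffAt_pdy hU hQ hr) hq
  have hPy := contDiffAt_pdy hU hP hq
  have hSy := contDiffAt_pdy hU hS hq
  have hQx := contDiffAt_pdx hU hQ hq
  have hSx := contDiffAt_pdx hU hS hq
  have hQy := contDiffAt_pdy hU hQ hq
  have hRx := contDiffAt_pdx hU hR hq
  have hP0 := hP q hq
  have hQ0 := hQ q hq
  have hR0 := hR q hq
  have hS0 := hS q hq
  exact ((((((((hSxx.sub (contDiffAt_const.mul hRyx)).add hQyy).sub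
    ((contDiffAt_const.mul hS0).mul hPy)).sub (hP0.mul hSy)).add
    ((contDiffAt_const.mul hS0).mul hQx)).add ((contDiffAt_const.mul hQ0).mul hSx)).add
    ((contDiffAt_const.mul hR0).mul hQy)).sub ((contDiffAt_const.mul hR0).mul hRx))

/-- Effective formula (4.17) for `Ω = (5/3)·(∂φ₁/∂y − ∂φ₂/∂x)` when `B ≠ 0`. -/
theorem Omega_effective_formula_B_ne_zero
    (U : Set (ℝ × ℝ)) (hU : IsOpen U) (hUconn : IsConnected U)
    (P Q R S : ℝ → ℝ → ℝ)
    (hP : Smooth2 U P) (hQ : Smooth2 U Q) (hR : Smooth2 U R) (hS : Smooth2 U S)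
    (hB : ∀ x y : ℝ, (x, y) ∈ U → coefB P Q R S x y ≠ 0) :
    ∀ x y : ℝ, (x, y) ∈ U →
      (5/3) * (pdy (phiB1 P Q R S) x y - pdx (phiB2 P Q R S) x y) =
        2 * coefA P Q R S x y * pdy (coefB P Q R S) x y *
            (coefA P Q R S x y * S x y - pdy (coefB P Q R S) x y)
            / (coefB P Q R S x y)^3
        + (2 * pdy (coefA P Q R S) x y - 3 * coefA P Q R S x y * R x y) *
            pdy (coefB P Q R S) x y / (coefB P Q R S x y)^2
        + (pdx (coefB P Q R S) x y - 2 * pdy (coefA P Q R S) x y) *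
            coefA P Q R S x y * S x y / (coefB P Q R S x y)^2
        + (coefA P Q R S x y * pdy (pdy (coefB P Q R S)) x y
            - (coefA P Q R S x y)^2 * pdy S x y) / (coefB P Q R S x y)^2
        - pdy (pdy (coefA P Q R S)) x y / coefB P Q R S x y
        + (3 * pdy (coefA P Q R S) x y * R x y
            + 3 * coefA P Q R S x y * pdy R x y
            - pdx (coefA P Q R S) x y * S x y
            - coefA P Q R S x y * pdx S x y) / coefB P Q R S x y
        + pdx R x y - 2 * pdy Q x y := by
  intro x y hxy
  have hP' : ∀ q ∈ U, ContDiffAt ℝ (⊤:ℕ∞) (Function.uncurry P) q :=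
    fun q hq => hP.contDiffAt (hU.mem_nhds hq)
  have hQ' : ∀ q ∈ U, ContDiffAt ℝ (⊤:ℕ∞) (Function.uncurry Q) q :=
    fun q hq => hQ.contDiffAt (hU.mem_nhds hq)
  have hR' : ∀ q ∈ U, ContDiffAt ℝ (⊤:ℕ∞) (Function.uncurry R) q :=
    fun q hq => hR.contDiffAt (hU.mem_nhds hq)
  have hS' : ∀ q ∈ U, ContDiffAt ℝ (⊤:ℕ∞) (Function.uncurry S) q :=
    fun q hq => hS.contDiffAt (hU.mem_nhds hq)
  have hA' := smooth_coefA hU hP' hQ' hR' hS'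
  have hB' := smooth_coefB hU hP' hQ' hR' hS'
  have hAy' : ∀ q ∈ U, ContDiffAt ℝ (⊤:ℕ∞) (Function.uncurry (pdy (coefA P Q R S))) q :=
    fun q hq => contDiffAt_pdy hU hA' hq
  have hBy' : ∀ q ∈ U, ContDiffAt ℝ (⊤:ℕ∞) (Function.uncurry (pdy (coefB P Q R S))) q :=
    fun q hq => contDiffAt_pdy hU hB' hq
  have hBx' : ∀ q ∈ U, ContDiffAt ℝ (⊤:ℕ∞) (Function.uncurry (pdx (coefB P Q R S))) q :=
    fun q hq => contDiffAt_pdx hU hB' hq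
  -- derivatives in the y-direction at (x, y)
  have hSd := hasDerivAt_pdy' (hS' _ hxy)
  have hRd := hasDerivAt_pdy' (hR' _ hxy)
  have hQd := hasDerivAt_pdy' (hQ' _ hxy)
  have hAd := hasDerivAt_pdy' (hA' _ hxy)
  have hBd := hasDerivAt_pdy' (hB' _ hxy)
  have hAyd := hasDerivAt_pdy' (hAy' _ hxy)
  have hByd := hasDerivAt_pdy' (hBy' _ hxy)
  have hBxd := hasDerivAt_pdy' (hBx' _ hxy)
  -- derivatives in the x-direction at (x, y)
  have hSdx := hasDerivAt_pdx' (hS' _ hxy)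
  have hRdx := hasDerivAt_pdx' (hR' _ hxy)
  have hAdx := hasDerivAt_pdx' (hA' _ hxy)
  have hBdx := hasDerivAt_pdx' (hB' _ hxy)
  have hBydx := hasDerivAt_pdx' (hBy' _ hxy)
  have hb := hB x y hxy
  have hb2 : 5 * (coefB P Q R S x y) ^ 2 ≠ 0 :=
    mul_ne_zero (by norm_num) (pow_ne_zero _ hb)
  have hb5 : 5 * coefB P Q R S x y ≠ 0 := mul_ne_zero (by norm_num) hb
  have h1 := ((((hAd.const_mul (-3:ℝ)).mul ((hAd.mul hSd).sub hByd)).div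
      ((hBd.fun_pow 2).const_mul 5) hb2).sub
    ((((hAyd.add hBxd).sub ((hAd.const_mul (3:ℝ)).mul hRd)).const_mul (3:ℝ)).div
      (hBd.const_mul 5) hb5)).sub (hQd.const_mul ((6:ℝ)/5))
  have h2 := ((((hAdx.mul hSdx).sub hBydx).const_mul (3:ℝ)).div
      (hBdx.const_mul 5) hb5).sub (hRdx.const_mul ((3:ℝ)/5))
  have e1 : pdy (phiB1 P Q R S) x y = _ := h1.deriv
  have e2 : pdx (phiB2 P Q R S) x y = _ := h2.deriv
  rw [e1, e2, pdx_pdy_symm hU hB' hxy]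
  simp only [Pi.mul_apply, Pi.sub_apply, Pi.add_apply]
  field_simp
  ring
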